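/- arXiv:1403.7665 — 4 statements merged into one kernel-verified Lean document; each statement's English description precedes it below -/
import Mathlib

section
/- For every real number t, ∑_{x=1}^∞ e^{tx} · x/(x+1)! = e^{−t}(1 − e^{e^t} + e^{t + e^t}). That is, the moment generating function of the telescoping Poisson distribution is M(t) = e^{−t}(1 − e^{e^t} + e^{t+e^t}). -/
/-- For every real `t`, the moment generating function of the telescoping
Poisson distribution satisfies
`∑_{x=1}^∞ e^{tx} · x/(x+1)! = e^{-t} (1 - e^{e^t} + e^{t + e^t})`. -/
theorem stmt_5 (t : ℝ) :
    HasSum (fun x : ℕ+ => Real.exp (t * (x : ℕ)) * (((x : ℕ) : ℝ) / Nat.factorial ((x : ℕ) + 1)))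
      (Real.exp (-t) * (1 - Real.exp (Real.exp t) + Real.exp (t + Real.exp t))) := by
  set u : ℝ := Real.exp t with hu
  have hu0 : u ≠ 0 := Real.exp_ne_zero t
  -- exp series
  have hexp : HasSum (fun n : ℕ => u ^ n / n.factorial) (Real.exp u) := by
    rw [Real.exp_eq_exp_ℝ]
    exact NormedSpace.expSeries_div_hasSum_exp u
  have hA : HasSum (fun n : ℕ => u ^ (n + 1) / (n + 1).factorial)
      (Real.exp u - ∑ i ∈ Finset.range 1, u ^ i / i.factorial) :=
    (hasSum_nat_add_iff' 1).mpr hexp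
  have hB : HasSum (fun n : ℕ => u ^ (n + 2) / (n + 2).factorial)
      (Real.exp u - ∑ i ∈ Finset.range 2, u ^ i / i.factorial) :=
    (hasSum_nat_add_iff' 2).mpr hexp
  have hB' := hB.mul_left u⁻¹
  have hS := hA.sub hB'
  -- transfer from ℕ to ℕ+
  apply Equiv.pnatEquivNat.symm.hasSum_iff.mp
  have hfun : ((fun x : ℕ+ => Real.exp (t * (x : ℕ)) * (((x : ℕ) : ℝ) / Nat.factorial ((x : ℕ) + 1)))
      ∘ Equiv.pnatEquivNat.symm)
      = fun n : ℕ => u ^ (n + 1) / (n + 1).factorial - u⁻¹ * (u ^ (n + 2) / (n + 2).factorial) := by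
    funext n
    have hx : ((Equiv.pnatEquivNat.symm n : ℕ+) : ℕ) = n + 1 := rfl
    simp only [Function.comp_apply, hx]
    have he : Real.exp (t * ((n : ℝ) + 1)) = u ^ (n + 1) := by
      rw [hu, ← Real.exp_nat_mul]
      push_cast
      ring_nf
    push_cast
    rw [he]
    have hf1 : ((n + 1).factorial : ℝ) ≠ 0 := Nat.cast_ne_zero.mpr (n + 1).factorial_ne_zero
    have hf2 : ((n + 2).factorial : ℝ) ≠ 0 := Nat.cast_ne_zero.mpr (n + 2).factorial_ne_zero
    have hfact : ((n + 2).factorial : ℝ) = (n + 2) * (n + 1).factorial := by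
      rw [Nat.factorial_succ (n + 1)]
      push_cast
      ring
    field_simp
    rw [hfact]
    ring
  rw [hfun]
  convert hS using 1
  · rfl
  have hval : Real.exp (-t) = u⁻¹ := by rw [Real.exp_neg, hu]
  have hval2 : Real.exp (t + u) = u * Real.exp u := by rw [Real.exp_add, hu]
  rw [hval, hval2]
  simp [Finset.sum_range_succ]
  field_simp
  ring
end

section
/- Let 0 < θ < 1 and let X be a random variable on the nonnegative integers with P(X = x) = θ^x/x! − θ^{x+1}/(x+1)!. Then for every real t ≠ 0, E(e^{tX}) = ∑_{x=0}^∞ e^{tx}(θ^x/x! − θ^{x+1}/(x+1)!) = e^{θe^t}(1 − e^{−t}) + e^{−t}. -/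
open Nat in
/-- For `0 < θ < 1` and a random variable `X` on the nonnegative integers with
`P(X = x) = θ^x/x! - θ^{x+1}/(x+1)!`, for every real `t ≠ 0`,
`E(e^{tX}) = ∑_{x=0}^∞ e^{tx} (θ^x/x! - θ^{x+1}/(x+1)!) = e^{θe^t}(1 - e^{-t}) + e^{-t}`. -/
theorem stmt_7 (θ : ℝ) (hθ0 : 0 < θ) (hθ1 : θ < 1) (t : ℝ) (ht : t ≠ 0) :
    HasSum (fun x : ℕ =>
        Real.exp (t * x) * (θ ^ x / Nat.factorial x - θ ^ (x + 1) / Nat.factorial (x + 1)))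
      (Real.exp (θ * Real.exp t) * (1 - Real.exp (-t)) + Real.exp (-t)) := by
  set u := θ * Real.exp t with hu
  have h1 : HasSum (fun n : ℕ => u ^ n / n !) (Real.exp u) := by
    rw [Real.exp_eq_exp_ℝ]
    exact NormedSpace.expSeries_div_hasSum_exp u
  have h2 : HasSum (fun n : ℕ => u ^ (n + 1) / ((n + 1)! : ℝ)) (Real.exp u - 1) := by
    have := (hasSum_nat_add_iff' (f := fun n : ℕ => u ^ n / (n ! : ℝ)) 1).mpr h1
    simpa [Finset.sum_range_one] using this
  have key := h1.sub (h2.mul_left (Real.exp (-t)))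
  have heq : (fun x : ℕ =>
      Real.exp (t * x) * (θ ^ x / Nat.factorial x - θ ^ (x + 1) / Nat.factorial (x + 1)))
      = fun n : ℕ => u ^ n / (n ! : ℝ) - Real.exp (-t) * (u ^ (n + 1) / ((n + 1)! : ℝ)) := by
    funext n
    have he : Real.exp (t * n) = (Real.exp t) ^ n := by
      rw [← Real.exp_nat_mul]; ring_nf
    have h3 : Real.exp (-t) * Real.exp t ^ (n + 1) = Real.exp t ^ n := by
      rw [Real.exp_neg, pow_succ]
      field_simp
    rw [he, hu, mul_pow, mul_pow,
      show Real.exp (-t) * (θ ^ (n+1) * Real.exp t ^ (n+1) / ((n+1)! : ℝ))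
        = θ ^ (n+1) / ((n+1)! : ℝ) * (Real.exp (-t) * Real.exp t ^ (n+1)) by ring, h3]
    ring
  rw [heq, show Real.exp u * (1 - Real.exp (-t)) + Real.exp (-t)
    = Real.exp u - Real.exp (-t) * (Real.exp u - 1) by ring]
  exact key
end

section
/- For every positive integer n, ∑_{k=1}^{n} C_{n,k} = C_n, where C_{n,k} = (k/(2n−k))·C(2n−k, n) is the k-fold Catalan convolution and C_n = (1/(n+1))·C(2n, n) is the n-th Catalan number. -/
lemma aux_term (n k : ℕ) (hk1 : 1 ≤ k) (hk2 : k ≤ n) :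
    ((k : ℝ) / ((2 * n - k : ℕ) : ℝ)) * (Nat.choose (2 * n - k) n : ℝ)
      = (Nat.choose (2 * n - 1 - k) (n - 1) : ℝ) - (Nat.choose (2 * n - 1 - k) n : ℝ) := by
  set m := 2 * n - k with hm
  have hmn : n ≤ m := by omega
  have hmpos : 0 < m := by omega
  have hnpos : 1 ≤ n := hk1.trans hk2
  have hml : 2 * n - 1 - k = m - 1 := by omega
  have h1 : m * Nat.choose (m - 1) (n - 1) = Nat.choose m n * n := by
    have h := Nat.add_one_mul_choose_eq (m - 1) (n - 1)
    simp -failIfUnchanged only [Nat.succ_eq_add_one] at h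
    rwa [Nat.sub_add_cancel hmpos, Nat.sub_add_cancel hnpos] at h
  have h2 : m * Nat.choose (m - 1) n = Nat.choose m n * (m - n) := by
    have ha := Nat.add_one_mul_choose_eq (m - 1) n
    simp -failIfUnchanged only [Nat.succ_eq_add_one] at ha
    rw [Nat.sub_add_cancel hmpos] at ha
    exact ha.trans (Nat.choose_succ_right_eq m n)
  have key : k * Nat.choose m n + m * Nat.choose (m - 1) n = m * Nat.choose (m - 1) (n - 1) := by
    have hkn : k + (m - n) = n := by omega
    calc k * Nat.choose m n + m * Nat.choose (m - 1) n
        = Nat.choose m n * (k + (m - n)) := by rw [h2]; ring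
      _ = Nat.choose m n * n := by rw [hkn]
      _ = m * Nat.choose (m - 1) (n - 1) := h1.symm
  have hmr : (m : ℝ) ≠ 0 := by positivity
  rw [hml, div_mul_eq_mul_div, div_eq_iff hmr, sub_mul]
  have := congrArg (fun x : ℕ => (x : ℝ)) key
  push_cast at this
  linarith

/-- For every positive integer `n`, `∑_{k=1}^n C_{n,k} = C_n`, where
`C_{n,k} = (k/(2n-k)) · C(2n-k, n)` is the k-fold Catalan convolution and
`C_n = (1/(n+1)) · C(2n, n)` is the n-th Catalan number. -/
theorem stmt_11 (n : ℕ) (hn : 1 ≤ n) :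
    ∑ k ∈ Finset.Icc 1 n, ((k : ℝ) / ((2 * n - k : ℕ) : ℝ)) * (Nat.choose (2 * n - k) n : ℝ)
      = (1 / ((n : ℝ) + 1)) * (Nat.choose (2 * n) n : ℝ) := by
  have hsum : ∑ k ∈ Finset.Icc 1 n, ((k : ℝ) / ((2 * n - k : ℕ) : ℝ)) * (Nat.choose (2 * n - k) n : ℝ)
      = ∑ k ∈ Finset.Icc 1 n, ((Nat.choose (2 * n - 1 - k) (n - 1) : ℝ) - (Nat.choose (2 * n - 1 - k) n : ℝ)) := by
    apply Finset.sum_congr rfl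
    intro k hk
    rw [Finset.mem_Icc] at hk
    exact aux_term n k hk.1 hk.2
  rw [hsum, Finset.sum_sub_distrib]
  have reidx : ∀ f : ℕ → ℝ, ∑ k ∈ Finset.Icc 1 n, f (2 * n - 1 - k) = ∑ j ∈ Finset.Icc (n - 1) (2 * n - 2), f j := by
    intro f
    apply Finset.sum_nbij' (fun k => 2 * n - 1 - k) (fun j => 2 * n - 1 - j)
    · intro a ha; rw [Finset.mem_Icc] at *; omega
    · intro a ha; rw [Finset.mem_Icc] at *; omega
    · intro a ha; rw [Finset.mem_Icc] at ha; omega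
    · intro a ha; rw [Finset.mem_Icc] at ha; omega
    · intro a ha; rfl
  rw [reidx (fun j => (Nat.choose j (n - 1) : ℝ)), reidx (fun j => (Nat.choose j n : ℝ))]
  have s1 : ∑ j ∈ Finset.Icc (n - 1) (2 * n - 2), (Nat.choose j (n - 1) : ℝ)
      = (Nat.choose (2 * n - 1) n : ℝ) := by
    rw [← Nat.cast_sum]
    have h : ∑ j ∈ Finset.Icc (n - 1) (2 * n - 2), Nat.choose j (n - 1) = Nat.choose (2 * n - 1) n := by
      rw [Nat.sum_Icc_choose]; congr 1 <;> omega
    rw [h]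
  have s2 : ∑ j ∈ Finset.Icc (n - 1) (2 * n - 2), (Nat.choose j n : ℝ)
      = (Nat.choose (2 * n - 1) (n + 1) : ℝ) := by
    rw [← Nat.cast_sum]
    have h : ∑ j ∈ Finset.Icc (n - 1) (2 * n - 2), Nat.choose j n = Nat.choose (2 * n - 1) (n + 1) := by
      rcases Nat.eq_or_lt_of_le hn with h | h
      · subst h; simp
      · have hIcc : Finset.Icc (n - 1) (2 * n - 2) = insert (n - 1) (Finset.Icc n (2 * n - 2)) := by
          ext x; simp only [Finset.mem_Icc, Finset.mem_insert]; omega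
        rw [hIcc, Finset.sum_insert (by rw [Finset.mem_Icc]; omega),
          Nat.choose_eq_zero_of_lt (by omega), Nat.sum_Icc_choose, zero_add]
        congr 1; omega
    rw [h]
  rw [s1, s2]
  have hp : Nat.choose (2 * n) n = Nat.choose (2 * n - 1) (n - 1) + Nat.choose (2 * n - 1) n := by
    have e := Nat.choose_succ_succ (2 * n - 1) (n - 1)
    simp only [Nat.succ_eq_add_one] at e
    rwa [show 2 * n - 1 + 1 = 2 * n by omega, show n - 1 + 1 = n by omega] at e
  have hsym : Nat.choose (2 * n - 1) (n - 1) = Nat.choose (2 * n - 1) n := by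
    have h := Nat.choose_symm (show n ≤ 2 * n - 1 by omega)
    rwa [show 2 * n - 1 - n = n - 1 by omega] at h
  have hA : Nat.choose (2 * n) n = 2 * Nat.choose (2 * n - 1) n := by omega
  have hB : Nat.choose (2 * n - 1) (n + 1) * (n + 1) = Nat.choose (2 * n - 1) n * (n - 1) := by
    have h := Nat.choose_succ_right_eq (2 * n - 1) n
    rwa [show 2 * n - 1 - n = n - 1 by omega] at h
  have hnr : ((n : ℝ) + 1) ≠ 0 := by positivity
  rw [one_div, eq_comm, inv_mul_eq_div, div_eq_iff hnr, sub_mul]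
  have cA := congrArg (fun x : ℕ => (x : ℝ)) hA
  have cB := congrArg (fun x : ℕ => (x : ℝ)) hB
  push_cast at cA
  push_cast [Nat.cast_sub hn] at cB
  nlinarith [cA, cB]
end

section
/- Fix a positive integer k. Then the ratio C_{n,k}/C_n tends to k/2^{k+1} as n → ∞, where C_{n,k} = (k/(2n−k))·C(2n−k, n) and C_n = (1/(n+1))·C(2n, n). In other words, the probability that a uniformly random 123-avoiding permutation of {1,…,n} has its first ascent at positions k, k+1 converges to k/2^{k+1}. -/
open Filter Finset Nat
private lemma lin_tendsto (a b c d : ℝ) (hd : 0 < d) :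
    Filter.Tendsto (fun n : ℕ => (c * n + a) / (d * n + b)) Filter.atTop (nhds (c / d)) := by
  have h1 : Filter.Tendsto (fun n : ℕ => c + a / n) atTop (nhds c) := by
    simpa using tendsto_const_nhds.add (tendsto_const_div_atTop_nhds_zero_nat a)
  have h2 : Filter.Tendsto (fun n : ℕ => d + b / n) atTop (nhds d) := by
    simpa using tendsto_const_nhds.add (tendsto_const_div_atTop_nhds_zero_nat b)
  refine (h1.div h2 hd.ne').congr' ?_
  filter_upwards [eventually_ge_atTop 1] with n hn
  have hn0 : (n : ℝ) ≠ 0 := by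
    have : (1 : ℝ) ≤ n := by exact_mod_cast hn
    linarith
  have hinv : (n : ℝ)⁻¹ ≠ 0 := inv_ne_zero hn0
  have e1 : c + a / (n:ℝ) = (c * n + a) * (n:ℝ)⁻¹ := by field_simp
  have e2 : d + b / (n:ℝ) = (d * n + b) * (n:ℝ)⁻¹ := by field_simp
  show (c + a / (n:ℝ)) / (d + b / (n:ℝ)) = _
  rw [e1, e2, mul_div_mul_right _ _ hinv]

/-- Fix a positive integer `k`. Then `C_{n,k} / C_n → k / 2^{k+1}` as `n → ∞`,
where `C_{n,k} = (k/(2n-k)) · C(2n-k, n)` and `C_n = (1/(n+1)) · C(2n, n)`. -/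
theorem stmt_12 (k : ℕ) (hk : 1 ≤ k) :
    Filter.Tendsto
      (fun n : ℕ =>
        (((k : ℝ) / ((2 * n - k : ℕ) : ℝ)) * (Nat.choose (2 * n - k) n : ℝ))
          / ((1 / ((n : ℝ) + 1)) * (Nat.choose (2 * n) n : ℝ)))
      Filter.atTop (nhds ((k : ℝ) / 2 ^ (k + 1))) := by
  -- limit of leading factor
  have hA : Filter.Tendsto (fun n : ℕ => ((k:ℝ) * n + k) / (2 * n + (-(k:ℝ))))
      atTop (nhds ((k:ℝ) / 2)) := lin_tendsto (k:ℝ) (-(k:ℝ)) (k:ℝ) 2 two_pos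
  -- limit of each factor
  have hB : ∀ i ∈ range k, Filter.Tendsto
      (fun n : ℕ => (1 * (n:ℝ) + (-(i:ℝ))) / (2 * n + (-(i:ℝ)))) atTop (nhds ((1:ℝ)/2)) :=
    fun i _ => lin_tendsto (-(i:ℝ)) (-(i:ℝ)) 1 2 two_pos
  have hP : Filter.Tendsto
      (fun n : ℕ => ∏ i ∈ range k, (1 * (n:ℝ) + (-(i:ℝ))) / (2 * n + (-(i:ℝ))))
      atTop (nhds (((1:ℝ)/2) ^ k)) := by
    have := tendsto_finset_prod (range k) hB
    simpa using this
  have hAB := hA.mul hP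
  have hval : (k:ℝ) / 2 * ((1:ℝ)/2) ^ k = (k:ℝ) / 2 ^ (k+1) := by
    rw [div_pow, one_pow, pow_succ]
    ring
  rw [hval] at hAB
  refine hAB.congr' ?_
  filter_upwards [eventually_ge_atTop (k+1)] with n hn
  have hkn : k ≤ n := by omega
  have hk2n : k ≤ 2 * n := by omega
  have hn2nk : n ≤ 2 * n - k := by omega
  have hnkn : 2 * n - k - n = n - k := by omega
  have hx : ((2 * n - k : ℕ) : ℝ) = 2 * (n:ℝ) - k := by
    push_cast [Nat.cast_sub hk2n]; ring
  have hc1 : (Nat.choose (2 * n - k) n : ℝ) = (2 * n - k)! / ((n)! * ((n - k))!) := by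
    rw [Nat.cast_choose ℝ hn2nk, hnkn]
  have hc2 : (Nat.choose (2 * n) n : ℝ) = (2 * n)! / ((n)! * (n)!) := by
    rw [Nat.cast_choose ℝ (by omega : n ≤ 2 * n), show 2 * n - n = n by omega]
  have hf1 : ((2 * n)! : ℝ) = ((2 * n - k)! : ℝ) * ∏ i ∈ range k, (2 * (n:ℝ) - i) := by
    have := Nat.factorial_mul_descFactorial hk2n
    have h2 : ((2 * n).descFactorial k : ℝ) = ∏ i ∈ range k, (2 * (n:ℝ) - i) := by
      rw [Nat.descFactorial_eq_prod_range]
      push_cast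
      refine Finset.prod_congr rfl fun i hi => ?_
      have : i ≤ 2 * n := by have := mem_range.mp hi; omega
      push_cast [Nat.cast_sub this]; ring
    calc ((2 * n)! : ℝ) = (((2 * n - k)! * (2 * n).descFactorial k : ℕ) : ℝ) := by
          rw [this]
      _ = ((2 * n - k)! : ℝ) * ∏ i ∈ range k, (2 * (n:ℝ) - i) := by push_cast [h2]; ring
  have hf2 : ((n)! : ℝ) = (((n - k))! : ℝ) * ∏ i ∈ range k, ((n:ℝ) - i) := by
    have := Nat.factorial_mul_descFactorial hkn
    have h2 : (n.descFactorial k : ℝ) = ∏ i ∈ range k, ((n:ℝ) - i) := by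
      rw [Nat.descFactorial_eq_prod_range]
      push_cast
      refine Finset.prod_congr rfl fun i hi => ?_
      have : i ≤ n := by have := mem_range.mp hi; omega
      push_cast [Nat.cast_sub this]; ring
    calc ((n)! : ℝ) = (((n - k)! * n.descFactorial k : ℕ) : ℝ) := by rw [this]
      _ = _ := by push_cast [h2]; ring
  -- nonzero facts
  have hP1 : (0:ℝ) < ∏ i ∈ range k, ((n:ℝ) - i) := by
    apply Finset.prod_pos
    intro i hi
    have hik : i < k := mem_range.mp hi
    have : (i:ℝ) < n := by exact_mod_cast lt_of_lt_of_le hik hkn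
    linarith
  have hP2 : (0:ℝ) < ∏ i ∈ range k, (2 * (n:ℝ) - i) := by
    apply Finset.prod_pos
    intro i hi
    have hik : i < k := mem_range.mp hi
    have : (i:ℝ) < 2 * n := by
      have : i < 2 * n := by omega
      exact_mod_cast this
    linarith
  have hF1 : ((2 * n - k)! : ℝ) ≠ 0 := by positivity
  have hF2 : (((n - k))! : ℝ) ≠ 0 := by positivity
  have hden : (2 * (n:ℝ) - k) ≠ 0 := by
    have : (k:ℝ) ≤ n := by exact_mod_cast hkn
    have hn1 : (1:ℝ) ≤ n := by exact_mod_cast (by omega : 1 ≤ n)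
    nlinarith
  have hn1 : ((n:ℝ) + 1) ≠ 0 := by positivity
  -- now compute
  rw [hx, hc1, hc2, hf1, hf2, Finset.prod_div_distrib]
  simp only [one_mul, ← sub_eq_add_neg]
  field_simp [hden, hn1, hF1, hF2, hP1.ne', hP2.ne']
end
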